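/- Fix μ ∈ ℝ and c ∈ ℝ with μ > c. The function σ ↦ P(μ, σ, c) is strictly decreasing on (0, ∞): if 0 < σ < σ' then P(μ, σ, c) > P(μ, σ', c). -/

import Mathlib

open Real MeasureTheory Filter Topology

/-- Standard normal density φ(x) = exp(-x²/2)/√(2π). -/
noncomputable def stdPdf (x : ℝ) : ℝ := Real.exp (-(x ^ 2) / 2) / Real.sqrt (2 * Real.pi)

/-- Standard normal CDF Φ(x) = ∫_{-∞}^x φ(u) du. -/
noncomputable def stdCdf (x : ℝ) : ℝ := ∫ u in Set.Iio x, stdPdf u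

/-- P(μ, σ, c): probability that an agent with prior N(μ, σ²) and link cost c
is never ostracized (Proposition 1). -/
noncomputable def Pstay (μ σ c : ℝ) : ℝ :=
  ∫ q in Set.Ioi c, (1 - Real.exp (-(2 / σ ^ 2) * (μ - c) * (q - c))) * stdPdf ((q - μ) / σ) / σ

lemma stdPdf_pos (x : ℝ) : 0 < stdPdf x := by
  unfold stdPdf
  positivity

lemma integrable_stdPdf : Integrable stdPdf := by
  have h : stdPdf = fun x => (Real.sqrt (2 * Real.pi))⁻¹ * Real.exp (-(1/2 : ℝ) * x ^ 2) := by
    funext x; unfold stdPdf; rw [div_eq_inv_mul]; ring_nf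
  rw [h]
  exact (integrable_exp_neg_mul_sq (by norm_num)).const_mul _

lemma shiftIoi (g : ℝ → ℝ) (a d : ℝ) :
    ∫ x in Set.Ioi a, g (x - d) = ∫ x in Set.Ioi (a - d), g x := by
  rw [← integral_indicator measurableSet_Ioi, ← integral_indicator measurableSet_Ioi,
    ← integral_sub_right_eq_self (Set.indicator (Set.Ioi (a - d)) g) d]
  congr 1
  funext x
  simp only [Set.indicator, Set.mem_Ioi]
  have : x - d > a - d ↔ x > a := by constructor <;> intro h <;> linarith
  simp [this]

lemma affineIoi (g : ℝ → ℝ) (m cc σ : ℝ) (hσ : 0 < σ) :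
    ∫ q in Set.Ioi cc, g ((q - m) / σ) = σ * ∫ x in Set.Ioi ((cc - m) / σ), g x := by
  have h1 : (fun q => g ((q - m) / σ)) = fun q => (fun y => g (y - m / σ)) (σ⁻¹ * q) := by
    funext q; congr 1; field_simp
  rw [h1, integral_comp_mul_left_Ioi (fun y => g (y - m / σ)) cc (inv_pos.mpr hσ),
    inv_inv, smul_eq_mul, shiftIoi _ _ (m / σ)]
  congr 2
  field_simp

lemma pstay_eq (μ σ c : ℝ) (hσ : 0 < σ) (hμ : c ≤ μ) :
    Pstay μ σ c = ∫ z in Set.Ioc (-((μ - c) / σ)) ((μ - c) / σ), stdPdf z := by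
  have key : ∀ q : ℝ,
      (1 - Real.exp (-(2 / σ ^ 2) * (μ - c) * (q - c))) * stdPdf ((q - μ) / σ) / σ
        = stdPdf ((q - μ) / σ) / σ - stdPdf ((q - (2 * c - μ)) / σ) / σ := by
    intro q
    have hexp : Real.exp (-(2 / σ ^ 2) * (μ - c) * (q - c)) * stdPdf ((q - μ) / σ)
        = stdPdf ((q - (2 * c - μ)) / σ) := by
      unfold stdPdf
      rw [mul_div_assoc', ← Real.exp_add]
      congr 2
      field_simp
      ring
    rw [← hexp]; ring
  have h1 : IntegrableOn (fun q => stdPdf ((q - μ) / σ) / σ) (Set.Ioi c) :=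
    (((integrable_stdPdf.comp_div hσ.ne').comp_sub_right μ).div_const σ).integrableOn
  have h2 : IntegrableOn (fun q => stdPdf ((q - (2 * c - μ)) / σ) / σ) (Set.Ioi c) :=
    (((integrable_stdPdf.comp_div hσ.ne').comp_sub_right (2 * c - μ)).div_const σ).integrableOn
  unfold Pstay
  simp_rw [key]
  rw [integral_sub h1 h2]
  have e1 : ∫ q in Set.Ioi c, stdPdf ((q - μ) / σ) / σ
      = ∫ x in Set.Ioi (-((μ - c) / σ)), stdPdf x := by
    rw [integral_div, affineIoi stdPdf μ c σ hσ]
    rw [show (c - μ) / σ = -((μ - c) / σ) by ring]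
    field_simp
  have e2 : ∫ q in Set.Ioi c, stdPdf ((q - (2 * c - μ)) / σ) / σ
      = ∫ x in Set.Ioi ((μ - c) / σ), stdPdf x := by
    rw [integral_div, affineIoi stdPdf (2 * c - μ) c σ hσ]
    rw [show (c - (2 * c - μ)) / σ = (μ - c) / σ by ring]
    field_simp
  rw [e1, e2]
  have ht : 0 ≤ (μ - c) / σ := div_nonneg (by linarith) hσ.le
  have hsplit : ∫ x in Set.Ioi (-((μ - c) / σ)), stdPdf x
      = (∫ x in Set.Ioc (-((μ - c) / σ)) ((μ - c) / σ), stdPdf x)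
        + ∫ x in Set.Ioi ((μ - c) / σ), stdPdf x := by
    rw [← setIntegral_union (Set.Ioc_disjoint_Ioi le_rfl) measurableSet_Ioi
      integrable_stdPdf.integrableOn integrable_stdPdf.integrableOn,
      Set.Ioc_union_Ioi_eq_Ioi (by linarith)]
  linarith

/-- P(μ, σ, c) is strictly decreasing in σ on (0, ∞), for μ > c. -/
theorem stmt_2 (μ c : ℝ) (hμ : μ > c) (σ σ' : ℝ) (hσ : 0 < σ) (hσ' : σ < σ') :
    Pstay μ σ c > Pstay μ σ' c := by
  have hσ'0 : 0 < σ' := hσ.trans hσ'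
  set t := (μ - c) / σ with htdef
  set t' := (μ - c) / σ' with ht'def
  have ht'pos : 0 < t' := div_pos (by linarith) hσ'0
  have htt' : t' < t := by
    apply div_lt_div_of_pos_left (by linarith) hσ hσ'
  rw [pstay_eq μ σ c hσ hμ.le, pstay_eq μ σ' c hσ'0 hμ.le]
  have hsplit1 : ∫ x in Set.Ioc (-t) t, stdPdf x
      = (∫ x in Set.Ioc (-t) (-t'), stdPdf x) + ∫ x in Set.Ioc (-t') t, stdPdf x := by
    rw [← setIntegral_union (Set.Ioc_disjoint_Ioc_of_le le_rfl) measurableSet_Ioc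
      integrable_stdPdf.integrableOn integrable_stdPdf.integrableOn,
      Set.Ioc_union_Ioc_eq_Ioc (by linarith) (by linarith)]
  have hsplit2 : ∫ x in Set.Ioc (-t') t, stdPdf x
      = (∫ x in Set.Ioc (-t') t', stdPdf x) + ∫ x in Set.Ioc t' t, stdPdf x := by
    rw [← setIntegral_union (Set.Ioc_disjoint_Ioc_of_le le_rfl) measurableSet_Ioc
      integrable_stdPdf.integrableOn integrable_stdPdf.integrableOn,
      Set.Ioc_union_Ioc_eq_Ioc (by linarith) (by linarith)]
  have hnn : 0 ≤ ∫ x in Set.Ioc (-t) (-t'), stdPdf x :=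
    setIntegral_nonneg measurableSet_Ioc fun x _ => (stdPdf_pos x).le
  have hpos : 0 < ∫ x in Set.Ioc t' t, stdPdf x := by
    rw [← intervalIntegral.integral_of_le htt'.le]
    exact intervalIntegral.intervalIntegral_pos_of_pos_on
      integrable_stdPdf.intervalIntegrable (fun x _ => stdPdf_pos x) htt'
  linarith
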